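/- arXiv:0806.3318 — 5 statements merged into one kernel-verified Lean document; each statement's English description precedes it below -/
import Mathlib

section
/- Let K be a real symmetric positive definite g×g matrix and β ∈ ℝ^g. Then for every l ∈ ℤ^g and Z ∈ ℝ^g, Θ[β](Z + lK) = -(1/2)lKlᵀ - lZᵀ + Θ[β](Z). -/
open Finset in
/-- The tropical Riemann theta function with characteristic `β`. -/
noncomputable def ThetaChar {g : ℕ} (K : Matrix (Fin g) (Fin g) ℝ) (β Z : Fin g → ℝ) : ℝ :=
  (1/2) * (∑ i, ∑ j, β i * K i j * β j) + (∑ i, β i * Z i) +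
    sInf {q : ℝ | ∃ m : Fin g → ℤ,
      q = (1/2) * (∑ i, ∑ j, (m i : ℝ) * K i j * (m j : ℝ)) +
          ∑ i, (m i : ℝ) * (Z i + ∑ j, β j * K j i)}

open Finset Matrix

private lemma dp_eq {g : ℕ} (K : Matrix (Fin g) (Fin g) ℝ) (x y : Fin g → ℝ) :
    x ⬝ᵥ (K *ᵥ y) = ∑ i, ∑ j, x i * K i j * y j := by
  simp [dotProduct, Matrix.mulVec, Finset.mul_sum, mul_assoc]

private lemma dp_swap {g : ℕ} {K : Matrix (Fin g) (Fin g) ℝ} (hsym : K.IsSymm)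
    (x y : Fin g → ℝ) : x ⬝ᵥ (K *ᵥ y) = y ⬝ᵥ (K *ᵥ x) := by
  rw [Matrix.dotProduct_mulVec, dotProduct_comm]
  congr 1
  rw [show K *ᵥ x = Kᵀ *ᵥ x by rw [hsym.eq], ← Matrix.vecMul_transpose, Matrix.transpose_transpose]

private def Sset {g : ℕ} (K : Matrix (Fin g) (Fin g) ℝ) (v : Fin g → ℝ) : Set ℝ :=
  {q : ℝ | ∃ m : Fin g → ℤ,
    q = (1/2) * ((fun i => (m i : ℝ)) ⬝ᵥ (K *ᵥ fun i => (m i : ℝ))) +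
        (fun i => (m i : ℝ)) ⬝ᵥ v}

private lemma Sset_nonempty {g : ℕ} (K : Matrix (Fin g) (Fin g) ℝ) (v : Fin g → ℝ) :
    (Sset K v).Nonempty :=
  ⟨0, 0, by simp [Matrix.mulVec, dotProduct]⟩

private lemma Sset_bddBelow {g : ℕ} {K : Matrix (Fin g) (Fin g) ℝ} (hsym : K.IsSymm)
    (hpd : K.PosDef) (v : Fin g → ℝ) : BddBelow (Sset K v) := by
  set w : Fin g → ℝ := K⁻¹ *ᵥ v with hw
  have hKw : K *ᵥ w = v := by
    rw [hw, Matrix.mulVec_mulVec, Matrix.mul_nonsing_inv _ hpd.det_pos.ne'.isUnit,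
      Matrix.one_mulVec]
  refine ⟨-(1/2) * (w ⬝ᵥ (K *ᵥ w)), ?_⟩
  rintro q ⟨m, rfl⟩
  set x : Fin g → ℝ := fun i => (m i : ℝ)
  have hnn : 0 ≤ (x + w) ⬝ᵥ (K *ᵥ (x + w)) := by
    have := hpd.posSemidef.dotProduct_mulVec_nonneg (x + w)
    simpa using this
  have hxw : x ⬝ᵥ (K *ᵥ w) = x ⬝ᵥ v := by rw [hKw]
  have hwx : w ⬝ᵥ (K *ᵥ x) = x ⬝ᵥ v := by rw [dp_swap hsym, hKw]
  rw [add_dotProduct, Matrix.mulVec_add, dotProduct_add, dotProduct_add, hxw, hwx] at hnn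
  linarith

private lemma sInf_Sset_shift {g : ℕ} {K : Matrix (Fin g) (Fin g) ℝ} (hsym : K.IsSymm)
    (hpd : K.PosDef) (v : Fin g → ℝ) (l : Fin g → ℤ) :
    sInf (Sset K (v + (K *ᵥ fun i => (l i : ℝ)))) =
      -(1/2) * ((fun i => (l i : ℝ)) ⬝ᵥ (K *ᵥ fun i => (l i : ℝ))) -
        (fun i => (l i : ℝ)) ⬝ᵥ v + sInf (Sset K v) := by
  set lR : Fin g → ℝ := fun i => (l i : ℝ) with hlR
  set c : ℝ := -(1/2) * (lR ⬝ᵥ (K *ᵥ lR)) - lR ⬝ᵥ v with hc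
  have key : ∀ m : Fin g → ℤ,
      (1/2) * ((fun i => ((m i : ℝ))) ⬝ᵥ (K *ᵥ fun i => ((m i : ℝ)))) +
        (fun i => ((m i : ℝ))) ⬝ᵥ (v + (K *ᵥ lR)) =
      ((1/2) * ((fun i => (((m + l) i : ℤ) : ℝ)) ⬝ᵥ (K *ᵥ fun i => (((m + l) i : ℤ) : ℝ))) +
        (fun i => (((m + l) i : ℤ) : ℝ)) ⬝ᵥ v) + c := by
    intro m
    set x : Fin g → ℝ := fun i => (m i : ℝ) with hx
    have hml : (fun i => (((m + l) i : ℤ) : ℝ)) = x + lR := by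
      funext i; simp [hx, hlR]
    rw [hml]
    have h1 : x ⬝ᵥ (K *ᵥ lR) = lR ⬝ᵥ (K *ᵥ x) := dp_swap hsym x lR
    rw [dotProduct_add, add_dotProduct, Matrix.mulVec_add, dotProduct_add, dotProduct_add,
      add_dotProduct, hc, h1]
    ring
  have keyinv : ∀ m : Fin g → ℤ,
      (1/2) * ((fun i => ((m i : ℝ))) ⬝ᵥ (K *ᵥ fun i => ((m i : ℝ)))) +
        (fun i => ((m i : ℝ))) ⬝ᵥ v + c =
      (1/2) * ((fun i => (((m - l) i : ℤ) : ℝ)) ⬝ᵥ (K *ᵥ fun i => (((m - l) i : ℤ) : ℝ))) +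
        (fun i => (((m - l) i : ℤ) : ℝ)) ⬝ᵥ (v + (K *ᵥ lR)) := by
    intro m
    have := key (m - l)
    rw [sub_add_cancel] at this
    linarith [this]
  apply le_antisymm
  · have h : sInf (Sset K (v + (K *ᵥ lR))) - c ≤ sInf (Sset K v) := by
      refine le_csInf (Sset_nonempty _ _) ?_
      rintro q ⟨m, rfl⟩
      have hmem : (1/2) * ((fun i => ((m i : ℝ))) ⬝ᵥ (K *ᵥ fun i => ((m i : ℝ)))) +
          (fun i => ((m i : ℝ))) ⬝ᵥ v + c ∈ Sset K (v + (K *ᵥ lR)) := ⟨m - l, keyinv m⟩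
      have := csInf_le (Sset_bddBelow hsym hpd _) hmem
      linarith
    linarith
  · refine le_csInf (Sset_nonempty _ _) ?_
    rintro q ⟨m, rfl⟩
    rw [key m]
    have : sInf (Sset K v) ≤ (1/2) * ((fun i => (((m + l) i : ℤ) : ℝ)) ⬝ᵥ
        (K *ᵥ fun i => (((m + l) i : ℤ) : ℝ))) + (fun i => (((m + l) i : ℤ) : ℝ)) ⬝ᵥ v :=
      csInf_le (Sset_bddBelow hsym hpd v) ⟨m + l, rfl⟩
    linarith

private lemma thetaChar_eq {g : ℕ} {K : Matrix (Fin g) (Fin g) ℝ} (hsym : K.IsSymm)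
    (β Z : Fin g → ℝ) :
    ThetaChar K β Z = (1/2) * (∑ i, ∑ j, β i * K i j * β j) + β ⬝ᵥ Z +
      sInf (Sset K (Z + K *ᵥ β)) := by
  have hv : (fun i => Z i + ∑ j, β j * K j i) = Z + K *ᵥ β := by
    funext i
    simp only [Pi.add_apply, Matrix.mulVec, dotProduct]
    congr 1
    exact Finset.sum_congr rfl fun j _ => by rw [hsym.apply, mul_comm]
  have hset : {q : ℝ | ∃ m : Fin g → ℤ,
      q = (1/2) * (∑ i, ∑ j, (m i : ℝ) * K i j * (m j : ℝ)) +
          ∑ i, (m i : ℝ) * (Z i + ∑ j, β j * K j i)} = Sset K (Z + K *ᵥ β) := by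
    ext q
    simp only [Sset, Set.mem_setOf_eq]
    refine exists_congr fun m => ?_
    rw [dp_eq, dotProduct, ← hv]
  rw [ThetaChar, hset, dotProduct]

theorem theta_char_quasi_periodic {g : ℕ} (K : Matrix (Fin g) (Fin g) ℝ)
    (hsym : K.IsSymm) (hpd : K.PosDef) (β Z : Fin g → ℝ) (l : Fin g → ℤ) :
    ThetaChar K β (Z + fun i => ∑ j, (l j : ℝ) * K j i) =
      -(1/2) * (∑ i, ∑ j, (l i : ℝ) * K i j * (l j : ℝ)) -
        (∑ i, (l i : ℝ) * Z i) + ThetaChar K β Z := by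
  set lR : Fin g → ℝ := fun i => (l i : ℝ) with hlR
  have hZ' : (Z + fun i => ∑ j, (l j : ℝ) * K j i) = Z + K *ᵥ lR := by
    funext i
    simp only [Pi.add_apply, Matrix.mulVec, dotProduct]
    congr 1
    exact Finset.sum_congr rfl fun j _ => by rw [hsym.apply, mul_comm]
  rw [hZ', thetaChar_eq hsym β (Z + K *ᵥ lR), thetaChar_eq hsym β Z]
  have hv : (Z + K *ᵥ lR) + K *ᵥ β = (Z + K *ᵥ β) + K *ᵥ lR := by
    rw [add_right_comm]
  rw [hv, sInf_Sset_shift hsym hpd (Z + K *ᵥ β) l]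
  have h1 : β ⬝ᵥ (Z + K *ᵥ lR) = β ⬝ᵥ Z + β ⬝ᵥ (K *ᵥ lR) := dotProduct_add _ _ _
  have h2 : lR ⬝ᵥ (Z + K *ᵥ β) = lR ⬝ᵥ Z + lR ⬝ᵥ (K *ᵥ β) := dotProduct_add _ _ _
  have h3 : β ⬝ᵥ (K *ᵥ lR) = lR ⬝ᵥ (K *ᵥ β) := dp_swap hsym _ _
  have h4 : (∑ i, ∑ j, (l i : ℝ) * K i j * (l j : ℝ)) = lR ⬝ᵥ (K *ᵥ lR) := (dp_eq K lR lR).symm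
  have h5 : (∑ i, (l i : ℝ) * Z i) = lR ⬝ᵥ Z := rfl
  rw [h1, h2, h3, h4, h5]
  ring
end

section
/- Let K be a real symmetric positive definite g×g matrix and β ∈ (1/2)ℤ^g. Then Θ[β](Z) is an even function of Z: Θ[β](-Z) = Θ[β](Z) for all Z ∈ ℝ^g. -/
open Finset

section Aux

variable {g : ℕ} (K : Matrix (Fin g) (Fin g) ℝ)

private lemma quad_smul (t : ℝ) (y : Fin g → ℝ) :
    ∑ i, ∑ j, (t • y) i * K i j * (t • y) j = t ^ 2 * ∑ i, ∑ j, y i * K i j * y j := by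
  rw [Finset.mul_sum]
  refine Finset.sum_congr rfl fun i _ => ?_
  rw [Finset.mul_sum]
  refine Finset.sum_congr rfl fun j _ => ?_
  simp only [Pi.smul_apply, smul_eq_mul]
  ring

private lemma quad_lower (hpd : K.PosDef) :
    ∃ c > 0, ∀ x : Fin g → ℝ, c * ‖x‖ ^ 2 ≤ ∑ i, ∑ j, x i * K i j * x j := by
  have hQ : ∀ x : Fin g → ℝ, ∑ i, ∑ j, x i * K i j * x j = dotProduct x (K.mulVec x) := fun x => by
    simp [Matrix.mulVec, dotProduct, Finset.mul_sum, mul_assoc]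
  have hpos : ∀ x : Fin g → ℝ, x ≠ 0 → 0 < ∑ i, ∑ j, x i * K i j * x j := by
    intro x hx
    rw [hQ]
    have := hpd.dotProduct_mulVec_pos hx
    simpa using this
  rcases Nat.eq_zero_or_pos g with hg | hg
  · refine ⟨1, one_pos, fun x => ?_⟩
    subst hg
    have hx0 : x = 0 := funext fun i => i.elim0
    subst hx0
    simp only [norm_zero]
    simp
  · haveI : Nonempty (Fin g) := ⟨⟨0, hg⟩⟩
    have hcont : Continuous fun x : Fin g → ℝ => ∑ i, ∑ j, x i * K i j * x j := by
      refine continuous_finset_sum _ fun i _ => continuous_finset_sum _ fun j _ => ?_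
      exact ((continuous_apply i).mul continuous_const).mul (continuous_apply j)
    obtain ⟨x0, hx0mem, hx0min⟩ :=
      (isCompact_sphere (0 : Fin g → ℝ) 1).exists_isMinOn
        (NormedSpace.sphere_nonempty.mpr zero_le_one) hcont.continuousOn
    have hx0n : ‖x0‖ = 1 := by simpa using hx0mem
    have hx0ne : x0 ≠ 0 := by
      intro h; rw [h] at hx0n; simp at hx0n
    refine ⟨_, hpos x0 hx0ne, fun x => ?_⟩
    by_cases hx : x = 0
    · simp [hx]
    · have hnx : 0 < ‖x‖ := norm_pos_iff.mpr hx
      have hu : ‖x‖⁻¹ • x ∈ Metric.sphere (0 : Fin g → ℝ) 1 := by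
        rw [mem_sphere_zero_iff_norm, norm_smul, norm_inv, norm_norm,
          inv_mul_cancel₀ hnx.ne']
      have hle := isMinOn_iff.mp hx0min _ hu
      have hxu : x = ‖x‖ • (‖x‖⁻¹ • x) := by
        rw [smul_smul, mul_inv_cancel₀ hnx.ne', one_smul]
      calc (∑ i, ∑ j, x0 i * K i j * x0 j) * ‖x‖ ^ 2
          ≤ (∑ i, ∑ j, (‖x‖⁻¹ • x) i * K i j * (‖x‖⁻¹ • x) j) * ‖x‖ ^ 2 := by
            exact mul_le_mul_of_nonneg_right hle (sq_nonneg _)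
        _ = ∑ i, ∑ j, x i * K i j * x j := by
            conv_rhs => rw [hxu, quad_smul]
            ring

private lemma bddBelow_thetaSet (hpd : K.PosDef) (v : Fin g → ℝ) :
    BddBelow {q : ℝ | ∃ m : Fin g → ℤ,
      q = (1/2) * (∑ i, ∑ j, (m i : ℝ) * K i j * (m j : ℝ)) + ∑ i, (m i : ℝ) * v i} := by
  obtain ⟨c, hc, hcl⟩ := quad_lower K hpd
  set B : ℝ := ∑ i, |v i| with hB
  refine ⟨-(B ^ 2) / (2 * c), ?_⟩
  rintro q ⟨m, rfl⟩
  set x : Fin g → ℝ := fun i => (m i : ℝ) with hx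
  have h1 : c * ‖x‖ ^ 2 ≤ ∑ i, ∑ j, (m i : ℝ) * K i j * (m j : ℝ) := hcl x
  have h2 : |∑ i, (m i : ℝ) * v i| ≤ ‖x‖ * B := by
    calc |∑ i, (m i : ℝ) * v i| ≤ ∑ i, |(m i : ℝ) * v i| := Finset.abs_sum_le_sum_abs _ _
      _ ≤ ∑ i, ‖x‖ * |v i| := by
          refine Finset.sum_le_sum fun i _ => ?_
          rw [abs_mul]
          refine mul_le_mul_of_nonneg_right ?_ (abs_nonneg _)
          have := norm_le_pi_norm x i
          simpa using this
      _ = ‖x‖ * B := by rw [hB, Finset.mul_sum]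
  have h3 : -(‖x‖ * B) ≤ ∑ i, (m i : ℝ) * v i := neg_le_of_abs_le h2
  have hn : (0 : ℝ) ≤ ‖x‖ := norm_nonneg _
  have key : -(B ^ 2) / (2 * c) ≤ (1/2) * (c * ‖x‖ ^ 2) - ‖x‖ * B := by
    rw [div_le_iff₀ (by positivity)]
    nlinarith [sq_nonneg (c * ‖x‖ - B)]
  have : -(B ^ 2) / (2 * c) ≤ (1/2) * (∑ i, ∑ j, (m i : ℝ) * K i j * (m j : ℝ))
      + ∑ i, (m i : ℝ) * v i := by nlinarith
  exact this

private lemma swap_sum (hsym : K.IsSymm) (x y : Fin g → ℝ) :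
    ∑ i, ∑ j, x i * K i j * y j = ∑ i, ∑ j, y i * K i j * x j := by
  rw [Finset.sum_comm]
  refine Finset.sum_congr rfl fun p _ => Finset.sum_congr rfl fun q _ => ?_
  rw [hsym.apply p q]; ring

private lemma key_real (hsym : K.IsSymm) (β Z a b : Fin g → ℝ)
    (hb : ∀ i, β i = b i / 2) :
    (1/2) * (∑ i, ∑ j, (-a i - b i) * K i j * (-a j - b j)) +
      ∑ i, (-a i - b i) * (Z i + ∑ j, β j * K j i)
    = ((1/2) * (∑ i, ∑ j, a i * K i j * a j) +
        ∑ i, a i * (-Z i + ∑ j, β j * K j i)) - 2 * ∑ i, β i * Z i := by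
  have hquad : ∑ i, ∑ j, (-a i - b i) * K i j * (-a j - b j)
      = (∑ i, ∑ j, a i * K i j * a j) + ((∑ i, ∑ j, a i * K i j * b j) +
        ((∑ i, ∑ j, b i * K i j * a j) + (∑ i, ∑ j, b i * K i j * b j))) := by
    rw [← Finset.sum_add_distrib, ← Finset.sum_add_distrib, ← Finset.sum_add_distrib]
    refine Finset.sum_congr rfl fun i _ => ?_
    rw [← Finset.sum_add_distrib, ← Finset.sum_add_distrib, ← Finset.sum_add_distrib]
    exact Finset.sum_congr rfl fun j _ => by ring
  have hba : ∑ i, ∑ j, b i * K i j * a j = ∑ i, ∑ j, a i * K i j * b j :=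
    swap_sum K hsym b a
  have hlin : ∀ x : Fin g → ℝ, ∑ i, x i * (∑ j, β j * K j i)
      = (1/2) * ∑ i, ∑ j, x i * K i j * b j := by
    intro x
    rw [Finset.mul_sum]
    refine Finset.sum_congr rfl fun i _ => ?_
    rw [Finset.mul_sum, Finset.mul_sum]
    refine Finset.sum_congr rfl fun j _ => ?_
    rw [hb j, hsym.apply i j]; ring
  have hZsplit : ∀ W : Fin g → ℝ, ∑ i, (-a i - b i) * (W i + ∑ j, β j * K j i)
      = (-(∑ i, a i * W i) + -(∑ i, a i * (∑ j, β j * K j i))) +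
        (-(∑ i, b i * W i) + -(∑ i, b i * (∑ j, β j * K j i))) := by
    intro W
    simp only [← Finset.sum_neg_distrib, ← Finset.sum_add_distrib]
    exact Finset.sum_congr rfl fun i _ => by ring
  have haZ : ∑ i, a i * (-Z i + ∑ j, β j * K j i)
      = -(∑ i, a i * Z i) + ∑ i, a i * (∑ j, β j * K j i) := by
    simp only [← Finset.sum_neg_distrib, ← Finset.sum_add_distrib]
    exact Finset.sum_congr rfl fun i _ => by ring
  have hβZ : ∑ i, β i * Z i = (1/2) * ∑ i, b i * Z i := by
    rw [Finset.mul_sum]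
    exact Finset.sum_congr rfl fun i _ => by rw [hb i]; ring
  rw [hquad, hZsplit, haZ, hβZ, hba, hlin a, hlin b]
  ring

private lemma sInf_image_add (S : Set ℝ) (hne : S.Nonempty) (hbdd : BddBelow S) (c : ℝ) :
    sInf ((fun q => q + c) '' S) = sInf S + c := by
  have h := (OrderIso.addRight c).map_csInf' hne hbdd
  simpa using h.symm

end Aux

theorem theta_char_even {g : ℕ} (K : Matrix (Fin g) (Fin g) ℝ)
    (hsym : K.IsSymm) (hpd : K.PosDef) (β : Fin g → ℝ)
    (hβ : ∃ m : Fin g → ℤ, ∀ i, β i = (m i : ℝ) / 2) (Z : Fin g → ℝ) :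
    ThetaChar K β (-Z) = ThetaChar K β Z := by
  obtain ⟨n, hn⟩ := hβ
  have key : ∀ m : Fin g → ℤ,
      (1/2) * (∑ i, ∑ j, ((-m - n) i : ℝ) * K i j * ((-m - n) j : ℝ)) +
        ∑ i, ((-m - n) i : ℝ) * (Z i + ∑ j, β j * K j i)
      = ((1/2) * (∑ i, ∑ j, (m i : ℝ) * K i j * (m j : ℝ)) +
          ∑ i, (m i : ℝ) * ((-Z) i + ∑ j, β j * K j i)) - 2 * ∑ i, β i * Z i := by
    intro m
    have hk := key_real K hsym β Z (fun i => (m i : ℝ)) (fun i => (n i : ℝ))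
      (fun i => hn i)
    beta_reduce at hk
    simp only [Pi.sub_apply, Pi.neg_apply, Int.cast_sub, Int.cast_neg]
    exact hk
  have hne : ({q : ℝ | ∃ m : Fin g → ℤ,
      q = (1/2) * (∑ i, ∑ j, (m i : ℝ) * K i j * (m j : ℝ)) +
          ∑ i, (m i : ℝ) * (Z i + ∑ j, β j * K j i)} : Set ℝ).Nonempty :=
    ⟨_, ⟨0, rfl⟩⟩
  have hbdd : BddBelow {q : ℝ | ∃ m : Fin g → ℤ,
      q = (1/2) * (∑ i, ∑ j, (m i : ℝ) * K i j * (m j : ℝ)) +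
          ∑ i, (m i : ℝ) * (Z i + ∑ j, β j * K j i)} :=
    bddBelow_thetaSet K hpd (fun i => Z i + ∑ j, β j * K j i)
  have himg : {q : ℝ | ∃ m : Fin g → ℤ,
      q = (1/2) * (∑ i, ∑ j, (m i : ℝ) * K i j * (m j : ℝ)) +
          ∑ i, (m i : ℝ) * ((-Z) i + ∑ j, β j * K j i)}
      = (fun q => q + 2 * ∑ i, β i * Z i) ''
        {q : ℝ | ∃ m : Fin g → ℤ,
          q = (1/2) * (∑ i, ∑ j, (m i : ℝ) * K i j * (m j : ℝ)) +
              ∑ i, (m i : ℝ) * (Z i + ∑ j, β j * K j i)} := by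
    ext q
    constructor
    · rintro ⟨m, rfl⟩
      refine ⟨_, ⟨-m - n, rfl⟩, ?_⟩
      have hk := key m
      simp only []
      linarith
    · rintro ⟨p, ⟨m, rfl⟩, rfl⟩
      refine ⟨-m - n, ?_⟩
      have hk := key (-m - n)
      have hmm : -(-m - n) - n = m := by ring
      rw [hmm] at hk
      simp only []
      linarith
  unfold ThetaChar
  rw [himg, sInf_image_add _ hne hbdd]
  have : ∑ i, β i * (-Z) i = -∑ i, β i * Z i := by
    rw [← Finset.sum_neg_distrib]
    exact Finset.sum_congr rfl fun i _ => by simp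
  rw [this]
  ring
end

section
/- Let K be a real symmetric positive definite g×g matrix with K_{ij} ≤ 0 for all i ≠ j. If Z ∈ ℝ^g and l ∈ ℤ^g satisfy -lZᵀ > (1/2)lKlᵀ, then there exists l' ∈ ℤ^g with l' ≥ 0 or l' ≤ 0 (entrywise) such that -l'Zᵀ > (1/2)l'K(l')ᵀ. -/
theorem exists_signed_violator {g : ℕ} (K : Matrix (Fin g) (Fin g) ℝ)
    (hsym : K.IsSymm) (hpd : K.PosDef) (hoff : ∀ i j : Fin g, i ≠ j → K i j ≤ 0)
    (Z : Fin g → ℝ) (l : Fin g → ℤ)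
    (h : -(∑ i, (l i : ℝ) * Z i) >
      (1/2) * ∑ i, ∑ j, (l i : ℝ) * K i j * (l j : ℝ)) :
    ∃ l' : Fin g → ℤ, ((∀ i, 0 ≤ l' i) ∨ (∀ i, l' i ≤ 0)) ∧
      -(∑ i, (l' i : ℝ) * Z i) >
        (1/2) * ∑ i, ∑ j, (l' i : ℝ) * K i j * (l' j : ℝ) := by
  set p : Fin g → ℤ := fun i => max (l i) 0 with hp
  set m : Fin g → ℤ := fun i => min (l i) 0 with hm
  have hpm : ∀ i, (l i : ℝ) = (p i : ℝ) + (m i : ℝ) := by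
    intro i
    have : p i + m i = l i := by simp [hp, hm]
    push_cast [← this]; ring
  have hzero : ∀ i, (p i : ℝ) * (m i : ℝ) = 0 := by
    intro i
    have : p i * m i = 0 := by
      rcases le_or_gt (l i) 0 with h' | h'
      · simp [hp, hm, max_eq_right h']
      · simp [hp, hm, min_eq_right h'.le]
    exact_mod_cast congrArg (Int.cast : ℤ → ℝ) this
  have hcross : ∀ i j, 0 ≤ (p i : ℝ) * K i j * (m j : ℝ) := by
    intro i j
    rcases eq_or_ne i j with rfl | hij
    · have h0 := hzero i
      have : (p i : ℝ) * K i i * (m i : ℝ) = K i i * ((p i : ℝ) * (m i : ℝ)) := by ring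
      rw [this, h0, mul_zero]
    · have h1 : (0:ℝ) ≤ (p i : ℝ) := by exact_mod_cast le_max_right (l i) 0
      have h2 : ((m j : ℝ)) ≤ 0 := by exact_mod_cast min_le_right (l j) 0
      have h3 := hoff i j hij
      nlinarith [mul_nonneg (mul_nonneg h1 (neg_nonneg.2 h3)) (neg_nonneg.2 h2)]
  have hcross' : ∀ i j, 0 ≤ (m i : ℝ) * K i j * (p j : ℝ) := by
    intro i j
    rcases eq_or_ne i j with rfl | hij
    · have h0 := hzero i
      have : (m i : ℝ) * K i i * (p i : ℝ) = K i i * ((p i : ℝ) * (m i : ℝ)) := by ring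
      rw [this, h0, mul_zero]
    · have h1 : (0:ℝ) ≤ (p j : ℝ) := by exact_mod_cast le_max_right (l j) 0
      have h2 : ((m i : ℝ)) ≤ 0 := by exact_mod_cast min_le_right (l i) 0
      have h3 := hoff i j hij
      nlinarith [mul_nonneg (mul_nonneg h1 (neg_nonneg.2 h3)) (neg_nonneg.2 h2)]
  -- split linear part
  have hS : (∑ i, (l i : ℝ) * Z i)
      = (∑ i, (p i : ℝ) * Z i) + (∑ i, (m i : ℝ) * Z i) := by
    rw [← Finset.sum_add_distrib]
    exact Finset.sum_congr rfl fun i _ => by rw [hpm i]; ring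
  -- split quadratic part
  have hQ : (∑ i, ∑ j, (l i : ℝ) * K i j * (l j : ℝ))
      = (∑ i, ∑ j, (p i : ℝ) * K i j * (p j : ℝ))
      + (∑ i, ∑ j, (m i : ℝ) * K i j * (m j : ℝ))
      + ((∑ i, ∑ j, (p i : ℝ) * K i j * (m j : ℝ))
        + (∑ i, ∑ j, (m i : ℝ) * K i j * (p j : ℝ))) := by
    have : ∀ i j, (l i : ℝ) * K i j * (l j : ℝ)
        = (p i : ℝ) * K i j * (p j : ℝ) + (m i : ℝ) * K i j * (m j : ℝ)
        + ((p i : ℝ) * K i j * (m j : ℝ) + (m i : ℝ) * K i j * (p j : ℝ)) := by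
      intro i j; rw [hpm i, hpm j]; ring
    simp only [this, Finset.sum_add_distrib]
  have hC1 : 0 ≤ ∑ i, ∑ j, (p i : ℝ) * K i j * (m j : ℝ) :=
    Finset.sum_nonneg fun i _ => Finset.sum_nonneg fun j _ => hcross i j
  have hC2 : 0 ≤ ∑ i, ∑ j, (m i : ℝ) * K i j * (p j : ℝ) :=
    Finset.sum_nonneg fun i _ => Finset.sum_nonneg fun j _ => hcross' i j
  set Sp := ∑ i, (p i : ℝ) * Z i
  set Sm := ∑ i, (m i : ℝ) * Z i
  set Qp := ∑ i, ∑ j, (p i : ℝ) * K i j * (p j : ℝ)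
  set Qm := ∑ i, ∑ j, (m i : ℝ) * K i j * (m j : ℝ)
  have key : -(Sp + Sm) > (1/2) * Qp + (1/2) * Qm := by
    rw [← hS]; rw [hQ] at h; linarith
  rcases lt_or_ge ((1/2) * Qp) (-Sp) with hvp | hvp
  · exact ⟨p, Or.inl fun i => le_max_right _ _, hvp⟩
  · refine ⟨m, Or.inr fun i => min_le_right _ _, ?_⟩
    show -Sm > (1/2) * Qm
    linarith
end

section
/- Let K be the tridiagonal period matrix as above (positive definite, off-diagonal entries nonpositive, row sums positive). Then the fundamental region D_m = {Z ∈ ℝ^g : -lZᵀ ≤ lK(m + (1/2)l)ᵀ for all l ∈ ℤ^g} equals {Z ∈ ℝ^g : -lZᵀ ≤ lK(m + (1/2)l)ᵀ for all l of the form ±(e_j + e_{j+1} + ... + e_k), 1 ≤ j ≤ k ≤ g}. -/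
open Finset

/-- `l` is (plus or minus) the indicator vector of an index interval `[j,k]`. -/
def IsIntervalVec {g : ℕ} (l : Fin g → ℤ) : Prop :=
  ∃ j k : Fin g, j ≤ k ∧
    ((∀ i, l i = if j ≤ i ∧ i ≤ k then 1 else 0) ∨
     (∀ i, l i = if j ≤ i ∧ i ≤ k then -1 else 0))

namespace FundRegionAux

variable {g : ℕ}

/-- The shifted quadratic form. -/
noncomputable def G (K : Matrix (Fin g) (Fin g) ℝ) (c : Fin g → ℝ) (l : Fin g → ℤ) : ℝ :=
  (∑ i, (l i : ℝ) * c i) + (1/2) * ∑ i, ∑ j, (l i : ℝ) * K i j * (l j : ℝ)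

lemma G_add (K : Matrix (Fin g) (Fin g) ℝ) (hsym : K.IsSymm) (c : Fin g → ℝ)
    (l v : Fin g → ℤ) :
    G K c (l + v) = G K c l + G K c v + ∑ i, ∑ j, (l i : ℝ) * K i j * (v j : ℝ) := by
  have hswap : ∑ i, ∑ j, (v i : ℝ) * K i j * (l j : ℝ)
      = ∑ i, ∑ j, (l i : ℝ) * K i j * (v j : ℝ) := by
    rw [Finset.sum_comm]
    exact Finset.sum_congr rfl fun i _ => Finset.sum_congr rfl fun j _ => by
      rw [hsym.apply i j]; ring
  have h1 : ∑ i, (((l + v) i : ℤ) : ℝ) * c i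
      = (∑ i, (l i : ℝ) * c i) + ∑ i, (v i : ℝ) * c i := by
    rw [← Finset.sum_add_distrib]
    exact Finset.sum_congr rfl fun i _ => by simp [Pi.add_apply]; ring
  have h2 : ∑ i, ∑ j, (((l + v) i : ℤ) : ℝ) * K i j * (((l + v) j : ℤ) : ℝ)
      = (∑ i, ∑ j, (l i : ℝ) * K i j * (l j : ℝ))
        + (∑ i, ∑ j, (v i : ℝ) * K i j * (v j : ℝ))
        + (∑ i, ∑ j, (l i : ℝ) * K i j * (v j : ℝ))
        + (∑ i, ∑ j, (v i : ℝ) * K i j * (l j : ℝ)) := by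
    rw [← Finset.sum_add_distrib, ← Finset.sum_add_distrib, ← Finset.sum_add_distrib]
    refine Finset.sum_congr rfl fun i _ => ?_
    rw [← Finset.sum_add_distrib, ← Finset.sum_add_distrib, ← Finset.sum_add_distrib]
    refine Finset.sum_congr rfl fun j _ => ?_
    simp only [Pi.add_apply]; push_cast; ring
  simp only [G, h1, h2, hswap]; ring

lemma G_neg (K : Matrix (Fin g) (Fin g) ℝ) (c : Fin g → ℝ) (l : Fin g → ℤ) :
    G K (-c) l = G K c (-l) := by
  simp only [G]
  congr 1
  · exact Finset.sum_congr rfl fun i _ => by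
      simp only [Pi.neg_apply, Int.cast_neg]; ring
  · congr 1
    exact Finset.sum_congr rfl fun i _ => Finset.sum_congr rfl fun j _ => by
      simp only [Pi.neg_apply, Int.cast_neg]; ring

lemma interval_neg {v : Fin g → ℤ} (h : IsIntervalVec v) : IsIntervalVec (-v) := by
  obtain ⟨j, k, hjk, h | h⟩ := h
  · exact ⟨j, k, hjk, Or.inr fun i => by rw [Pi.neg_apply, h i]; split <;> norm_num⟩
  · exact ⟨j, k, hjk, Or.inl fun i => by rw [Pi.neg_apply, h i]; split <;> norm_num⟩

lemma peel (K : Matrix (Fin g) (Fin g) ℝ) (hsym : K.IsSymm)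
    (hoff : ∀ i j : Fin g, i ≠ j → K i j ≤ 0)
    (htri : ∀ i j : Fin g, i.val + 2 ≤ j.val ∨ j.val + 2 ≤ i.val → K i j = 0)
    (hrow : ∀ i : Fin g, 0 < ∑ j, K i j)
    (c : Fin g → ℝ) (hiv : ∀ v, IsIntervalVec v → 0 ≤ G K c v)
    (l : Fin g → ℤ) (i₀ : Fin g) (hpos : 0 < l i₀) :
    ∃ l' : Fin g → ℤ, (∑ i, (l' i).natAbs) < (∑ i, (l i).natAbs) ∧ G K c l' ≤ G K c l := by
  have hne : (univ : Finset (Fin g)).Nonempty := ⟨i₀, mem_univ _⟩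
  set s : ℤ := univ.sup' hne l with hs
  have hsmax : ∀ i, l i ≤ s := fun i => le_sup' l (mem_univ i)
  have hspos : 0 < s := lt_of_lt_of_le hpos (hsmax i₀)
  obtain ⟨i₁, -, hi₁⟩ := Finset.exists_mem_eq_sup' hne l
  -- candidates for left endpoint
  set A : Finset (Fin g) := univ.filter (fun j => ∀ t, j ≤ t → t ≤ i₁ → l t = s) with hA
  have hi₁A : i₁ ∈ A := by
    simp only [hA, mem_filter, mem_univ, true_and]
    intro t h1 h2
    rw [le_antisymm h2 h1, ← hi₁]
  set B : Finset (Fin g) := univ.filter (fun k => ∀ t, i₁ ≤ t → t ≤ k → l t = s) with hB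
  have hi₁B : i₁ ∈ B := by
    simp only [hB, mem_filter, mem_univ, true_and]
    intro t h1 h2
    rw [le_antisymm h2 h1, ← hi₁]
  set a : Fin g := A.min' ⟨i₁, hi₁A⟩ with ha
  set b : Fin g := B.max' ⟨i₁, hi₁B⟩ with hb
  have haA : a ∈ A := A.min'_mem _
  have hbB : b ∈ B := B.max'_mem _
  have hai₁ : a ≤ i₁ := A.min'_le i₁ hi₁A
  have hi₁b : i₁ ≤ b := B.le_max' i₁ hi₁B
  have hab : a ≤ b := hai₁.trans hi₁b
  have hI : ∀ t, a ≤ t → t ≤ b → l t = s := by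
    intro t h1 h2
    rcases le_total t i₁ with h | h
    · exact (mem_filter.mp haA).2 t h1 h
    · exact (mem_filter.mp hbB).2 t h h2
  have hLmax : ∀ i : Fin g, i.val + 1 = a.val → l i ≠ s := by
    intro i hia hcon
    have hiA : i ∈ A := by
      simp only [hA, mem_filter, mem_univ, true_and]
      intro t h1 h2
      rcases eq_or_lt_of_le h1 with rfl | hlt
      · exact hcon
      · have hat : a ≤ t := by
          have := (Fin.lt_def.mp hlt); exact Fin.le_def.mpr (by omega)
        exact hI t hat (h2.trans hi₁b)
    have : a ≤ i := A.min'_le i hiA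
    have := Fin.le_def.mp this
    omega
  have hRmax : ∀ i : Fin g, b.val + 1 = i.val → l i ≠ s := by
    intro i hib hcon
    have hiB : i ∈ B := by
      simp only [hB, mem_filter, mem_univ, true_and]
      intro t h1 h2
      rcases eq_or_lt_of_le h2 with rfl | hlt
      · exact hcon
      · have htb : t ≤ b := by
          have := (Fin.lt_def.mp hlt); exact Fin.le_def.mpr (by omega)
        exact hI t (hai₁.trans h1) htb
    have : i ≤ b := B.le_max' i hiB
    have := Fin.le_def.mp this
    omega
  set v : Fin g → ℤ := fun i => if a ≤ i ∧ i ≤ b then 1 else 0 with hv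
  have hvIV : IsIntervalVec v := by
    unfold IsIntervalVec
    exact ⟨a, b, hab, Or.inl fun i => rfl⟩
  refine ⟨l - v, ?_, ?_⟩
  · -- sum of natAbs strictly decreases
    refine Finset.sum_lt_sum (fun i _ => ?_) ⟨i₁, mem_univ _, ?_⟩
    · by_cases h : a ≤ i ∧ i ≤ b
      · have hli := hI i h.1 h.2
        simp only [Pi.sub_apply, hv, if_pos h, hli]
        omega
      · simp [Pi.sub_apply, hv, if_neg h]
    · have hli := hI i₁ hai₁ hi₁b
      simp only [Pi.sub_apply, hv, if_pos (And.intro hai₁ hi₁b), hli]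
      omega
  · -- G decreases
    have hdecomp := G_add K hsym c (l - v) v
    rw [sub_add_cancel] at hdecomp
    have hGv : 0 ≤ G K c v := hiv v hvIV
    have hcross : 0 ≤ ∑ i, ∑ j, (((l - v) i : ℤ) : ℝ) * K i j * ((v j : ℤ) : ℝ) := by
      have hLB : ∀ i j : Fin g, ((s : ℝ) - 1) * K i j * ((v j : ℤ) : ℝ)
          ≤ (((l - v) i : ℤ) : ℝ) * K i j * ((v j : ℤ) : ℝ) := by
        intro i j
        by_cases hj : a ≤ j ∧ j ≤ b
        · have hvj : v j = 1 := if_pos hj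
          by_cases hiI : a ≤ i ∧ i ≤ b
          · have : (l - v) i = s - 1 := by
              simp [Pi.sub_apply, hv, if_pos hiI, hI i hiI.1 hiI.2]
            rw [this, hvj]; push_cast; ring_nf; rfl
          · by_cases hfar : i.val + 2 ≤ j.val ∨ j.val + 2 ≤ i.val
            · rw [htri i j hfar]; ring_nf; rfl
            · push_neg at hfar
              have hne' : i ≠ j := fun h => hiI (h ▸ hj)
              have hvne : i.val ≠ j.val := fun h => hne' (Fin.ext h)
              have hK : K i j ≤ 0 := hoff i j hne'
              have hadj : i.val + 1 = j.val ∨ j.val + 1 = i.val := by omega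
              have hlis : l i ≠ s := by
                have hja := Fin.le_def.mp hj.1
                have hjb := Fin.le_def.mp hj.2
                have hiI' : ¬(a.val ≤ i.val ∧ i.val ≤ b.val) := by
                  intro h; exact hiI ⟨Fin.le_def.mpr h.1, Fin.le_def.mpr h.2⟩
                rcases hadj with h | h
                · exact hLmax i (by omega)
                · exact hRmax i (by omega)
              have hli : l i ≤ s - 1 := by have := hsmax i; omega
              have hlv : (l - v) i = l i := by
                simp [Pi.sub_apply, hv, if_neg hiI]
              rw [hlv, hvj]
              push_cast
              have hcast : (l i : ℝ) ≤ (s : ℝ) - 1 := by exact_mod_cast (by omega : l i ≤ s - 1)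
              nlinarith [hcast, hK]
        · have hvj : v j = 0 := if_neg hj
          rw [hvj]; push_cast; ring_nf; rfl
      have step1 : ∑ i, ∑ j, ((s : ℝ) - 1) * K i j * ((v j : ℤ) : ℝ)
          ≤ ∑ i, ∑ j, (((l - v) i : ℤ) : ℝ) * K i j * ((v j : ℤ) : ℝ) :=
        Finset.sum_le_sum fun i _ => Finset.sum_le_sum fun j _ => hLB i j
      have step0 : 0 ≤ ∑ i, ∑ j, ((s : ℝ) - 1) * K i j * ((v j : ℤ) : ℝ) := by
        rw [Finset.sum_comm]
        refine Finset.sum_nonneg fun j _ => ?_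
        have hcol : ∑ i, ((s : ℝ) - 1) * K i j * ((v j : ℤ) : ℝ)
            = ((s : ℝ) - 1) * ((v j : ℤ) : ℝ) * ∑ i, K j i := by
          rw [Finset.mul_sum]
          exact Finset.sum_congr rfl fun i _ => by rw [hsym.apply j i]; ring
        rw [hcol]
        have h1 : (0:ℝ) ≤ (s : ℝ) - 1 := by
          have : (1:ℤ) ≤ s := hspos
          have : (1:ℝ) ≤ (s:ℝ) := by exact_mod_cast this
          linarith
        have h2 : (0:ℝ) ≤ ((v j : ℤ) : ℝ) := by
          simp only [hv]; split <;> norm_num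
        exact mul_nonneg (mul_nonneg h1 h2) (le_of_lt (hrow j))
      linarith
    linarith [hdecomp, hGv, hcross]

lemma main (K : Matrix (Fin g) (Fin g) ℝ) (hsym : K.IsSymm)
    (hoff : ∀ i j : Fin g, i ≠ j → K i j ≤ 0)
    (htri : ∀ i j : Fin g, i.val + 2 ≤ j.val ∨ j.val + 2 ≤ i.val → K i j = 0)
    (hrow : ∀ i : Fin g, 0 < ∑ j, K i j) :
    ∀ (n : ℕ) (c : Fin g → ℝ) (l : Fin g → ℤ),
      (∀ v, IsIntervalVec v → 0 ≤ G K c v) → (∑ i, (l i).natAbs) = n → 0 ≤ G K c l := by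
  intro n
  induction n using Nat.strong_induction_on with
  | _ n ih =>
    intro c l hiv hn
    by_cases h0 : ∀ i, l i = 0
    · have : G K c l = 0 := by simp [G, h0]
      linarith [this.ge]
    · push_neg at h0
      obtain ⟨i₀, hi₀⟩ := h0
      by_cases hp : ∃ i, 0 < l i
      · obtain ⟨i, hi⟩ := hp
        obtain ⟨l', hlt, hle⟩ := peel K hsym hoff htri hrow c hiv l i hi
        have := ih _ (hn ▸ hlt) c l' hiv rfl
        linarith
      · push_neg at hp
        have hiv' : ∀ v, IsIntervalVec v → 0 ≤ G K (-c) v := fun v hv => by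
          rw [G_neg]; exact hiv (-v) (interval_neg hv)
        have hGeq : G K c l = G K (-c) (-l) := by
          rw [G_neg, neg_neg]
        have hi' : 0 < (-l) i₀ := by
          have := hp i₀; simp only [Pi.neg_apply]; omega
        obtain ⟨l', hlt, hle⟩ := peel K hsym hoff htri hrow (-c) hiv' (-l) i₀ hi'
        have hsumeq : (∑ i, ((-l) i).natAbs) = n := by
          rw [← hn]; exact Finset.sum_congr rfl fun i _ => by simp
        have := ih _ (hsumeq ▸ hlt) (-c) l' hiv' rfl
        rw [hGeq]
        linarith

end FundRegionAux

open FundRegionAux in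
theorem fundamental_region_finite_description {g : ℕ}
    (K : Matrix (Fin g) (Fin g) ℝ) (hsym : K.IsSymm) (hpd : K.PosDef)
    (hoff : ∀ i j : Fin g, i ≠ j → K i j ≤ 0)
    (htri : ∀ i j : Fin g, i.val + 2 ≤ j.val ∨ j.val + 2 ≤ i.val → K i j = 0)
    (hrow : ∀ i : Fin g, 0 < ∑ j, K i j)
    (m : Fin g → ℤ) :
    {Z : Fin g → ℝ | ∀ l : Fin g → ℤ,
        -(∑ i, (l i : ℝ) * Z i) ≤
          ∑ i, ∑ j, (l i : ℝ) * K i j * ((m j : ℝ) + (l j : ℝ) / 2)} =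
    {Z : Fin g → ℝ | ∀ l : Fin g → ℤ, IsIntervalVec l →
        -(∑ i, (l i : ℝ) * Z i) ≤
          ∑ i, ∑ j, (l i : ℝ) * K i j * ((m j : ℝ) + (l j : ℝ) / 2)} := by
  ext Z
  simp only [Set.mem_setOf_eq]
  constructor
  · intro h l _
    exact h l
  · intro h l
    set c : Fin g → ℝ := fun i => Z i + ∑ j, K i j * (m j : ℝ) with hc
    have key : ∀ w : Fin g → ℤ, G K c w
        = (∑ i, (w i : ℝ) * Z i)
          + ∑ i, ∑ j, (w i : ℝ) * K i j * ((m j : ℝ) + (w j : ℝ) / 2) := by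
      intro w
      simp only [G, hc]
      have h1 : ∑ i, (w i : ℝ) * (Z i + ∑ j, K i j * (m j : ℝ))
          = (∑ i, (w i : ℝ) * Z i) + ∑ i, ∑ j, (w i : ℝ) * (K i j * (m j : ℝ)) := by
        rw [← Finset.sum_add_distrib]
        exact Finset.sum_congr rfl fun i _ => by rw [mul_add, Finset.mul_sum]
      have h2 : ∑ i, ∑ j, (w i : ℝ) * K i j * ((m j : ℝ) + (w j : ℝ) / 2)
          = (∑ i, ∑ j, (w i : ℝ) * (K i j * (m j : ℝ)))
            + ∑ i, ∑ j, (w i : ℝ) * K i j * (w j : ℝ) / 2 := by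
        rw [← Finset.sum_add_distrib]
        refine Finset.sum_congr rfl fun i _ => ?_
        rw [← Finset.sum_add_distrib]
        exact Finset.sum_congr rfl fun j _ => by ring
      have h3 : (1/2 : ℝ) * ∑ i, ∑ j, (w i : ℝ) * K i j * (w j : ℝ)
          = ∑ i, ∑ j, (w i : ℝ) * K i j * (w j : ℝ) / 2 := by
        rw [Finset.mul_sum]
        refine Finset.sum_congr rfl fun i _ => ?_
        rw [Finset.mul_sum]
        exact Finset.sum_congr rfl fun j _ => by ring
      rw [h1, h2, h3]
      ring
    have hiv : ∀ v, IsIntervalVec v → 0 ≤ G K c v := by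
      intro v hv
      have := h v hv
      rw [key v]
      linarith
    have := FundRegionAux.main K hsym hoff htri hrow (∑ i, (l i).natAbs) c l hiv rfl
    rw [key l] at this
    linarith
end

section
/- Let T: ℤ × ℤ → ℝ satisfy the tropical bilinear equation T(n,t) + T(n,t+2) = min[2T(n,t+1), T(n-1,t+2) + T(n+1,t) + L] for all n, t, together with the quasi-periodicity T(n+g+1,t) = T(n,t) + an + bt + c and 2b - a < (g+1)L. Then for every t there exists n ∈ ℤ with T(n,t) + T(n,t+2) = 2T(n,t+1). -/
theorem bilinear_has_equality_point (g : ℕ) (hg : 0 < g) (L a b c : ℝ)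
    (T : ℤ → ℤ → ℝ)
    (hbil : ∀ n t : ℤ, T n t + T n (t + 2) =
      min (2 * T n (t + 1)) (T (n - 1) (t + 2) + T (n + 1) t + L))
    (hquasi : ∀ n t : ℤ, T (n + g + 1) t = T n t + (a * n + b * t + c))
    (hL : 2 * b - a < (g + 1) * L) :
    ∀ t : ℤ, ∃ n : ℤ, T n t + T n (t + 2) = 2 * T n (t + 1) := by
  intro t
  by_contra h
  push_neg at h
  have key : ∀ n : ℤ, T n (t + 2) - T (n - 1) (t + 2) = T (n + 1) t - T n t + L := by
    intro n
    have h1 := hbil n t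
    have h2 := h n
    rcases min_cases (2 * T n (t + 1)) (T (n - 1) (t + 2) + T (n + 1) t + L) with
      ⟨heq, _⟩ | ⟨heq, _⟩
    · exact absurd (h1.trans heq) h2
    · rw [heq] at h1; linarith
  -- telescope over n = 0 .. g
  have hsum : ∀ N : ℕ, T (N : ℤ) (t + 2) - T (-1) (t + 2) =
      T ((N : ℤ) + 1) t - T 0 t + (N + 1) * L := by
    intro N
    induction N with
    | zero =>
      have := key 0
      push_cast
      simp only [Int.zero_sub] at this ⊢
      push_cast at this ⊢
      linarith
    | succ k ih =>
      have hk := key ((k : ℤ) + 1)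
      have : ((k : ℤ) + 1) - 1 = (k : ℤ) := by ring
      rw [this] at hk
      push_cast
      push_cast at ih
      linarith
  have hfin := hsum g
  have hq1 := hquasi 0 t
  have hq2 := hquasi (-1) (t + 2)
  have e1 : ((0 : ℤ) + g + 1) = ((g : ℤ) + 1) := by ring
  have e2 : ((-1 : ℤ) + g + 1) = (g : ℤ) := by ring
  rw [e1] at hq1
  rw [e2] at hq2
  push_cast at hq1 hq2 hfin hL
  nlinarith [hL]
end
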